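/- Fix a positive integer l, a constant c̄ > 0, and let g : ℝ → ℝ satisfy g(T) > T for all large T. Assume: (i) ∫_T^{g(T)} |ζ(1/2+it)|² dt / ∫_T^{g(T)} |S₁(t)|^{2l} dt = (1/c̄)·ln T + O(1) as T → ∞; (ii) (t_ν) is a Gram sequence satisfying the Titchmarsh-sum asymptotic. For positive integers x, y, z, n with n ≥ 3 set F = (xⁿ + yⁿ)/zⁿ and K_F = 4π⁵·F/(3·c̄⁵), and let E(τ) = (1/τ)·(∫_{K_F·τ}^{g(K_F·τ)} |S₁(t)|^{2l} dt)⁵ · (∫_{K_F·τ}^{g(K_F·τ)} |ζ(1/2+it)|² dt)^{−5} · Σ_{ν : K_F·τ ≤ t_ν ≤ 2·K_F·τ} |ζ(1/2 + i t_ν)|²·|ζ(1/2 + i t_{ν+1})|². Then the following are equivalent: (a) for all positive integers x, y, z, n with n ≥ 3, E(τ) does not converge to 1 as τ → ∞; (b) for all positive integers x, y, z, n with n ≥ 3, xⁿ + yⁿ ≠ zⁿ (the Fermat–Wiles theorem). -/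

import Mathlib

open Filter Topology MeasureTheory

/-- |ζ(σ+it)|² -/
noncomputable def zsq (σ : ℝ) (t : ℝ) : ℝ :=
  ‖riemannZeta (↑σ + ↑t * Complex.I)‖ ^ 2

/-- S₁(t) = (1/π)·∫₀^t arg ζ(1/2 + iu) du -/
noncomputable def S1 (t : ℝ) : ℝ :=
  (1 / Real.pi) * ∫ u in (0:ℝ)..t, Complex.arg (riemannZeta (1/2 + ↑u * Complex.I))

/-- Riemann–Siegel theta function θ(t) = Im log Γ(1/4 + it/2) − (t/2)·ln π. -/
noncomputable def RStheta (t : ℝ) : ℝ :=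
  (Complex.log (Complex.Gamma (1/4 + (↑t/2) * Complex.I))).im - (t/2) * Real.log Real.pi

/-- A Gram sequence: strictly increasing positive reals tending to ∞ with θ(t_ν) = π·ν. -/
def IsGramSeq (tν : ℕ → ℝ) : Prop :=
  StrictMono tν ∧ (∀ ν : ℕ, 1 ≤ ν → 0 < tν ν) ∧ Filter.Tendsto tν Filter.atTop Filter.atTop ∧
    ∀ ν : ℕ, 1 ≤ ν → RStheta (tν ν) = Real.pi * ν

/-- Titchmarsh sum Σ_{T ≤ t_ν ≤ 2T} |ζ(1/2+it_ν)|²·|ζ(1/2+it_{ν+1})|². -/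
noncomputable def TitchSum (tν : ℕ → ℝ) (T : ℝ) : ℝ :=
  ∑' ν : ℕ, if T ≤ tν ν ∧ tν ν ≤ 2 * T then zsq (1/2) (tν ν) * zsq (1/2) (tν (ν+1)) else 0

/-- The Titchmarsh-sum asymptotic (Moser 1991):
Σ_{T ≤ t_ν ≤ 2T} |ζ(1/2+it_ν)|²|ζ(1/2+it_{ν+1})|² = (3/(4π⁵))·T·ln⁵T·(1+O(1/ln T)). -/
def TitchAsymp (tν : ℕ → ℝ) : Prop :=
  ∃ C : ℝ, ∀ᶠ T in Filter.atTop,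
    |TitchSum tν T / (3 / (4 * Real.pi ^ 5) * T * Real.log T ^ 5) - 1| ≤ C / Real.log T

/-- Key asymptotic lemma: under the quotient hypothesis and the Titchmarsh asymptotic,
the combined expression at `T = K·τ` tends to `(3/(4π⁵))·K·c̄⁵`. -/
lemma key_tendsto (l : ℕ) (cbar : ℝ) (hcbar : 0 < cbar) (g : ℝ → ℝ)
    (hquot : ∃ C : ℝ, ∀ᶠ T in atTop,
      |(∫ t in T..(g T), zsq (1/2) t) / (∫ t in T..(g T), |S1 t| ^ (2 * l)) -
        (1 / cbar) * Real.log T| ≤ C)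
    (tν : ℕ → ℝ) (htitch : TitchAsymp tν) (K : ℝ) (hK : 0 < K) :
    Tendsto (fun τ : ℝ => (1/τ) *
        ((∫ t in (K*τ)..(g (K*τ)), |S1 t| ^ (2*l)) ^ 5) *
        (((∫ t in (K*τ)..(g (K*τ)), zsq (1/2) t) ^ 5)⁻¹) *
        TitchSum tν (K*τ)) atTop (𝓝 (3 / (4 * Real.pi ^ 5) * K * cbar ^ 5)) := by
  obtain ⟨C₁, hC₁⟩ := htitch
  obtain ⟨C₂, hC₂⟩ := hquot
  set IS : ℝ → ℝ := fun T => ∫ t in T..(g T), |S1 t| ^ (2*l) with hIS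
  set IZ : ℝ → ℝ := fun T => ∫ t in T..(g T), zsq (1/2) t with hIZ
  set A : ℝ → ℝ := fun T => TitchSum tν T / (3 / (4 * Real.pi ^ 5) * T * Real.log T ^ 5) with hAdef
  set B : ℝ → ℝ := fun T => (IZ T / IS T) / ((1 / cbar) * Real.log T) with hBdef
  have hπ : (0:ℝ) < Real.pi := Real.pi_pos
  have hlog : Tendsto Real.log atTop atTop := Real.tendsto_log_atTop
  have hA : Tendsto A atTop (𝓝 1) := by
    rw [tendsto_iff_dist_tendsto_zero]
    simp only [Real.dist_eq]
    exact squeeze_zero' (Eventually.of_forall fun T => abs_nonneg _) hC₁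
      (tendsto_const_nhds.div_atTop hlog)
  have hB : Tendsto B atTop (𝓝 1) := by
    rw [tendsto_iff_dist_tendsto_zero]
    simp only [Real.dist_eq]
    apply squeeze_zero' (Eventually.of_forall fun T => abs_nonneg _)
      (g := fun T => C₂ * cbar / Real.log T)
    · filter_upwards [hC₂, hlog.eventually_gt_atTop 0] with T hT hL
      have hM : 0 < (1 / cbar) * Real.log T := by positivity
      have : |B T - 1| = |IZ T / IS T - (1 / cbar) * Real.log T| / ((1 / cbar) * Real.log T) := by
        rw [hBdef]
        rw [div_sub_one hM.ne', abs_div, abs_of_pos hM]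
      rw [this]
      rw [div_le_div_iff₀ hM hL]
      calc |IZ T / IS T - (1 / cbar) * Real.log T| * Real.log T
          ≤ C₂ * Real.log T := by
            exact mul_le_mul_of_nonneg_right hT hL.le
        _ = C₂ * cbar * ((1 / cbar) * Real.log T) := by
            field_simp
    · exact tendsto_const_nhds.div_atTop hlog
  have hKτ : Tendsto (fun τ : ℝ => K * τ) atTop atTop :=
    (tendsto_id.const_mul_atTop hK)
  have heq : ∀ᶠ τ : ℝ in atTop,
      (1/τ) * (IS (K*τ)) ^ 5 * ((IZ (K*τ)) ^ 5)⁻¹ * TitchSum tν (K*τ)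
      = 3 / (4 * Real.pi ^ 5) * K * cbar ^ 5 * A (K*τ) * (B (K*τ))⁻¹ ^ 5 := by
    have hTfacts : ∀ᶠ T in atTop,
        IS T ≠ 0 ∧ IZ T ≠ 0 ∧ 0 < Real.log T ∧ 0 < T := by
      filter_upwards [hC₂, hlog.eventually_gt_atTop (cbar * (|C₂| + 1)),
        eventually_gt_atTop 0] with T hT hL hT0
      have hLpos : 0 < Real.log T := lt_of_le_of_lt (by positivity) hL
      have hbig : |C₂| + 1 < (1 / cbar) * Real.log T := by
        rw [one_div, inv_mul_eq_div]
        rw [mul_comm] at hL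
        exact (lt_div_iff₀ hcbar).mpr hL
      have hRne : IZ T / IS T ≠ 0 := by
        intro h0
        rw [h0] at hT
        rw [zero_sub, abs_neg, abs_of_pos (by linarith [abs_nonneg C₂] : 0 < (1/cbar) * Real.log T)] at hT
        have := le_abs_self C₂
        linarith
      have hISne : IS T ≠ 0 := by
        intro h0
        apply hRne
        rw [h0, div_zero]
      refine ⟨hISne, ?_, hLpos, hT0⟩
      intro h0
      apply hRne
      rw [h0, zero_div]
    filter_upwards [hKτ.eventually hTfacts, eventually_gt_atTop 0] with τ hT hτ
    obtain ⟨hIS0, hIZ0, hL0, hT0⟩ := hT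
    set T := K * τ
    have hRne : IZ T / IS T ≠ 0 := div_ne_zero hIZ0 hIS0
    have hBne : B T ≠ 0 := by
      rw [hBdef]
      exact div_ne_zero hRne (by positivity)
    rw [hAdef, hBdef]
    field_simp
    ring
  refine Tendsto.congr' (heq.mono fun τ h => h.symm) ?_
  have : Tendsto (fun τ : ℝ => 3 / (4 * Real.pi ^ 5) * K * cbar ^ 5 * A (K*τ) * (B (K*τ))⁻¹ ^ 5)
      atTop (𝓝 (3 / (4 * Real.pi ^ 5) * K * cbar ^ 5 * 1 * (1:ℝ)⁻¹ ^ 5)) := by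
    exact ((tendsto_const_nhds.mul (hA.comp hKτ)).mul (((hB.comp hKτ).inv₀ one_ne_zero).pow 5))
  simpa using this

theorem zeta_equivalent_FLT_S1 (l : ℕ) (hl : 0 < l) (cbar : ℝ) (hcbar : 0 < cbar)
    (g : ℝ → ℝ) (hg : ∀ᶠ T in atTop, T < g T)
    (hquot : ∃ C : ℝ, ∀ᶠ T in atTop,
      |(∫ t in T..(g T), zsq (1/2) t) / (∫ t in T..(g T), |S1 t| ^ (2 * l)) -
        (1 / cbar) * Real.log T| ≤ C)
    (tν : ℕ → ℝ) (hgram : IsGramSeq tν) (htitch : TitchAsymp tν) :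
    ((∀ x y z n : ℕ, 0 < x → 0 < y → 0 < z → 3 ≤ n →
      ¬ Tendsto (fun τ : ℝ =>
        (1/τ) *
        ((∫ t in (4 * Real.pi ^ 5 * (((x:ℝ)^n + (y:ℝ)^n) / (z:ℝ)^n) / (3 * cbar ^ 5) * τ)..(g (4 * Real.pi ^ 5 * (((x:ℝ)^n + (y:ℝ)^n) / (z:ℝ)^n) / (3 * cbar ^ 5) * τ)), |S1 t| ^ (2 * l)) ^ 5) *
        (((∫ t in (4 * Real.pi ^ 5 * (((x:ℝ)^n + (y:ℝ)^n) / (z:ℝ)^n) / (3 * cbar ^ 5) * τ)..(g (4 * Real.pi ^ 5 * (((x:ℝ)^n + (y:ℝ)^n) / (z:ℝ)^n) / (3 * cbar ^ 5) * τ)), zsq (1/2) t) ^ 5)⁻¹) *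
        TitchSum tν (4 * Real.pi ^ 5 * (((x:ℝ)^n + (y:ℝ)^n) / (z:ℝ)^n) / (3 * cbar ^ 5) * τ))
        atTop (nhds 1))
    ↔ (∀ x y z n : ℕ, 0 < x → 0 < y → 0 < z → 3 ≤ n → x^n + y^n ≠ z^n)) := by
  have hπ : (0:ℝ) < Real.pi := Real.pi_pos
  have main : ∀ x y z n : ℕ, 0 < x → 0 < y → 0 < z → 3 ≤ n →
      Tendsto (fun τ : ℝ =>
        (1/τ) *
        ((∫ t in (4 * Real.pi ^ 5 * (((x:ℝ)^n + (y:ℝ)^n) / (z:ℝ)^n) / (3 * cbar ^ 5) * τ)..(g (4 * Real.pi ^ 5 * (((x:ℝ)^n + (y:ℝ)^n) / (z:ℝ)^n) / (3 * cbar ^ 5) * τ)), |S1 t| ^ (2 * l)) ^ 5) *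
        (((∫ t in (4 * Real.pi ^ 5 * (((x:ℝ)^n + (y:ℝ)^n) / (z:ℝ)^n) / (3 * cbar ^ 5) * τ)..(g (4 * Real.pi ^ 5 * (((x:ℝ)^n + (y:ℝ)^n) / (z:ℝ)^n) / (3 * cbar ^ 5) * τ)), zsq (1/2) t) ^ 5)⁻¹) *
        TitchSum tν (4 * Real.pi ^ 5 * (((x:ℝ)^n + (y:ℝ)^n) / (z:ℝ)^n) / (3 * cbar ^ 5) * τ))
        atTop (𝓝 (((x:ℝ)^n + (y:ℝ)^n) / (z:ℝ)^n)) := by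
    intro x y z n hx hy hz hn
    have hx' : (0:ℝ) < (x:ℝ) := by exact_mod_cast hx
    have hy' : (0:ℝ) < (y:ℝ) := by exact_mod_cast hy
    have hz' : (0:ℝ) < (z:ℝ) := by exact_mod_cast hz
    have hK : 0 < 4 * Real.pi ^ 5 * (((x:ℝ)^n + (y:ℝ)^n) / (z:ℝ)^n) / (3 * cbar ^ 5) := by
      positivity
    have h := key_tendsto l cbar hcbar g hquot tν htitch _ hK
    have hconst : ((x:ℝ)^n + (y:ℝ)^n) / (z:ℝ)^n
        = 3 / (4 * Real.pi ^ 5) *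
            (4 * Real.pi ^ 5 * (((x:ℝ)^n + (y:ℝ)^n) / (z:ℝ)^n) / (3 * cbar ^ 5)) * cbar ^ 5 := by
      have hzn : ((z:ℝ))^n ≠ 0 := by positivity
      field_simp
    rw [← hconst] at h
    exact h
  constructor
  · intro h x y z n hx hy hz hn heq
    apply h x y z n hx hy hz hn
    have hm := main x y z n hx hy hz hn
    have hzn : ((z:ℝ))^n ≠ 0 := by
      have hz' : (0:ℝ) < (z:ℝ) := by exact_mod_cast hz
      positivity
    have hF1 : ((x:ℝ)^n + (y:ℝ)^n) / (z:ℝ)^n = 1 := by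
      have hcast : ((x:ℝ)^n + (y:ℝ)^n) = (z:ℝ)^n := by exact_mod_cast heq
      rw [hcast, div_self hzn]
    rw [hF1] at hm
    simp only [hF1]
    exact hm
  · intro h x y z n hx hy hz hn htend
    have hm := main x y z n hx hy hz hn
    have hF1 : ((x:ℝ)^n + (y:ℝ)^n) / (z:ℝ)^n = 1 := tendsto_nhds_unique hm htend
    apply h x y z n hx hy hz hn
    have hzn : ((z:ℝ))^n ≠ 0 := by
      have hz' : (0:ℝ) < (z:ℝ) := by exact_mod_cast hz
      positivity
    have : ((x:ℝ)^n + (y:ℝ)^n) = (z:ℝ)^n := by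
      field_simp at hF1
      exact_mod_cast hF1
    exact_mod_cast this
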